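/- The generalized energy flow between two coherent states, ΔẼ := Ẽ(α_i) - Ẽ(α_f), satisfies ΔẼ = k_BT(|α_i|² - |α_f|²)(1 - e^{-2χ}), where Ẽ(α) = -k_BT·ln⟨α|e^{-H/k_BT}|α⟩ and H = ħω(N+1/2), χ = ħω/(2k_BT). -/

import Mathlib

open scoped Nat

/-- The effective potential Ẽ(α) = -k_BT ln⟨α|e^{-H/k_BT}|α⟩ for a coherent state `|α⟩`
and H = ħω(N+1/2), written via ⟨α|e^{-2χ(N+1/2)}|α⟩ = ∑ₙ e^{-|α|²}|α|^{2n}/n! · e^{-2χ(n+1/2)}. -/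
noncomputable def coherentEtilde (kT χ : ℝ) (α : ℂ) : ℝ :=
  -kT * Real.log (∑' n : ℕ,
    Real.exp (-(‖α‖ ^ 2)) * ‖α‖ ^ (2 * n) / (n ! : ℝ) *
      Real.exp (-2 * χ * ((n : ℝ) + 1 / 2)))

lemma aux_tsum (a χ : ℝ) :
    (∑' n : ℕ, Real.exp (-(a ^ 2)) * a ^ (2 * n) / (n ! : ℝ) *
      Real.exp (-2 * χ * ((n : ℝ) + 1 / 2)))
    = Real.exp (a ^ 2 * Real.exp (-2 * χ) - a ^ 2 - χ) := by
  have h1 : ∀ n : ℕ, Real.exp (-(a ^ 2)) * a ^ (2 * n) / (n ! : ℝ) *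
      Real.exp (-2 * χ * ((n : ℝ) + 1 / 2))
      = Real.exp (-(a ^ 2) - χ) * ((a ^ 2 * Real.exp (-2 * χ)) ^ n / (n ! : ℝ)) := by
    intro n
    have key : Real.exp (-(a ^ 2)) * Real.exp (-2 * χ * ((n : ℝ) + 1 / 2))
        = Real.exp (-(a ^ 2) - χ) * Real.exp (-2 * χ) ^ n := by
      rw [← Real.exp_nat_mul, ← Real.exp_add, ← Real.exp_add]
      congr 1; ring
    calc Real.exp (-(a ^ 2)) * a ^ (2 * n) / (n ! : ℝ) *
          Real.exp (-2 * χ * ((n : ℝ) + 1 / 2))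
        = (a ^ 2) ^ n / (n ! : ℝ) *
          (Real.exp (-(a ^ 2)) * Real.exp (-2 * χ * ((n : ℝ) + 1 / 2))) := by
          rw [pow_mul]; ring
      _ = _ := by rw [key, mul_pow]; ring
  simp_rw [h1]
  rw [tsum_mul_left,
    show (∑' n : ℕ, (a ^ 2 * Real.exp (-2 * χ)) ^ n / (n ! : ℝ))
      = Real.exp (a ^ 2 * Real.exp (-2 * χ)) from by
        rw [Real.exp_eq_exp_ℝ, NormedSpace.exp_eq_tsum_div],
    ← Real.exp_add]
  congr 1; ring

/-- the generalized energy flow between coherent states,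
ΔẼ = Ẽ(α_i) - Ẽ(α_f) = k_BT (|α_i|² - |α_f|²)(1 - e^{-2χ}), with χ = ħω/(2k_BT). -/
theorem coherent_energy_flow (hbarOmega kT χ : ℝ) (hw : 0 < hbarOmega) (hkT : 0 < kT)
    (hχ : χ = hbarOmega / (2 * kT)) (αi αf : ℂ) :
    coherentEtilde kT χ αi - coherentEtilde kT χ αf
      = kT * (‖αi‖ ^ 2 - ‖αf‖ ^ 2) * (1 - Real.exp (-2 * χ)) := by
  unfold coherentEtilde
  rw [aux_tsum, aux_tsum, Real.log_exp, Real.log_exp]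
  ring
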